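/- For v = 20 (t = 4), the minimum over all balanced companion families on {1,…,20} of the worst-case total set discrepancy under magnitude-1 swaps equals 8. -/

import Mathlib

/-- An (indexed) balanced companion family on `{1,…,4(t+1)}`: pairwise disjoint
2-element subsets `S 1, …, S (2t+2)` of `{1,…,4(t+1)}` whose union is all of
`{1,…,4(t+1)}`, such that for each `i = 1,…,t+1` the companion sets `S (2i-1)`
and `S (2i)` have equal element sums. -/
def IsBalancedCompanionFamily (t : ℕ) (S : ℕ → Finset ℕ) : Prop :=
  (∀ i ∈ Finset.Icc 1 (2*t+2), S i ⊆ Finset.Icc 1 (4*(t+1)) ∧ (S i).card = 2) ∧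
  (∀ i ∈ Finset.Icc 1 (2*t+2), ∀ j ∈ Finset.Icc 1 (2*t+2),
    i ≠ j → Disjoint (S i) (S j)) ∧
  (Finset.Icc 1 (2*t+2)).biUnion S = Finset.Icc 1 (4*(t+1)) ∧
  ∀ i ∈ Finset.Icc 1 (t+1), (S (2*i-1)).sum id = (S (2*i)).sum id

/-- A collection of popularity swaps of magnitude `p` on `{1,…,v}`: a permutation
`π` of `{1,…,v}` with `π ∘ π = id` and `|π i − i| ≤ p` for every `i ∈ {1,…,v}`. -/
def IsSwapCollection (v p : ℕ) (π : ℕ → ℕ) : Prop :=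
  (∀ i ∈ Finset.Icc 1 v, π i ∈ Finset.Icc 1 v) ∧
  (∀ i ∈ Finset.Icc 1 v, π (π i) = i) ∧
  (∀ i ∈ Finset.Icc 1 v, |(π i : ℤ) - (i : ℤ)| ≤ (p : ℤ))

/-- The total set discrepancy of the family `S` under the swap collection `π`:
`∑_{i=1}^{t+1} |∑_{x ∈ S (2i-1)} π x − ∑_{x ∈ S (2i)} π x|`. -/
def totalSetDiscrepancy (t : ℕ) (S : ℕ → Finset ℕ) (π : ℕ → ℕ) : ℤ :=
  ∑ i ∈ Finset.Icc 1 (t+1),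
    |((S (2*i-1)).sum fun x => (π x : ℤ)) - ((S (2*i)).sum fun x => (π x : ℤ))|

open Finset

def wgt (σ : Fin 5 → Bool) (k : ℕ) : ℤ :=
  (if k % 2 = 1 then 1 else -1) * (if σ ⟨(k-1)/2 % 5, Nat.mod_lt _ (by norm_num)⟩ then 1 else -1)

lemma wgt_pm (σ : Fin 5 → Bool) (k : ℕ) : wgt σ k = 1 ∨ wgt σ k = -1 := by
  unfold wgt; split <;> split <;> norm_num

lemma wgt_even (σ : Fin 5 → Bool) (i : ℕ) (h1 : 1 ≤ i) : wgt σ (2*i) = - wgt σ (2*i-1) := by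
  unfold wgt
  have h2 : (2*i) % 2 = 0 := by omega
  have h3 : (2*i-1) % 2 = 1 := by omega
  have h5 : (⟨(2*i-1)/2 % 5, Nat.mod_lt _ (by norm_num)⟩ : Fin 5)
      = ⟨(2*i-1-1)/2 % 5, Nat.mod_lt _ (by norm_num)⟩ := by
    apply Fin.ext; simp only; omega
  rw [h2, h3, h5]
  norm_num
  split <;> norm_num

def tau (K : ℕ → ℕ) (σ : Fin 5 → Bool) (x : ℕ) : ℤ := wgt σ (K x)

lemma tau_pm (K : ℕ → ℕ) (σ : Fin 5 → Bool) (x : ℕ) : tau K σ x = 1 ∨ tau K σ x = -1 :=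
  wgt_pm σ (K x)

def isDes (K : ℕ → ℕ) (σ : Fin 5 → Bool) (i : ℕ) : Prop :=
  1 ≤ i ∧ i ≤ 19 ∧ tau K σ i = 1 ∧ tau K σ (i+1) = -1

instance isDes.dec (K : ℕ → ℕ) (σ : Fin 5 → Bool) (i : ℕ) : Decidable (isDes K σ i) := by
  unfold isDes; infer_instance

def swapPi (K : ℕ → ℕ) (σ : Fin 5 → Bool) (x : ℕ) : ℕ :=
  if isDes K σ x then x + 1 else if isDes K σ (x-1) then x - 1 else x

lemma cnt1 : ∀ k ∈ Finset.Icc 1 10,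
    (∑ σ : Fin 5 → Bool, (if wgt σ k = 1 then (1:ℤ) else 0)) = 16 := by decide

lemma cnt2 : ∀ k ∈ Finset.Icc 1 10, ∀ k' ∈ Finset.Icc 1 10, k ≠ k' →
    (16:ℤ) ≤ ∑ σ : Fin 5 → Bool, (if wgt σ k ≠ wgt σ k' then (1:ℤ) else 0) := by decide

lemma swapPi_valid (K : ℕ → ℕ) (σ : Fin 5 → Bool) : IsSwapCollection 20 1 (swapPi K σ) := by
  refine ⟨?_, ?_, ?_⟩
  · intro i hi
    simp only [Finset.mem_Icc] at hi ⊢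
    unfold swapPi
    split_ifs with h1 h2
    · obtain ⟨_, h19, _, _⟩ := h1; omega
    · obtain ⟨h1', h19, _, _⟩ := h2; omega
    · omega
  · intro i hi
    simp only [Finset.mem_Icc] at hi
    by_cases h1 : isDes K σ i
    · have hp : swapPi K σ i = i + 1 := by unfold swapPi; rw [if_pos h1]
      rw [hp]
      have hnd : ¬ isDes K σ (i+1) := by
        intro h; have := h.2.2.1; have := h1.2.2.2; omega
      unfold swapPi
      rw [if_neg hnd]
      have : i + 1 - 1 = i := by omega
      rw [this, if_pos h1]
    · by_cases h2 : isDes K σ (i-1)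
      · have hi2 : 2 ≤ i := by have := h2.1; omega
        have hp : swapPi K σ i = i - 1 := by unfold swapPi; rw [if_neg h1, if_pos h2]
        rw [hp]
        unfold swapPi
        rw [if_pos h2]
        omega
      · have hp : swapPi K σ i = i := by unfold swapPi; rw [if_neg h1, if_neg h2]
        rw [hp, hp]
  · intro i hi
    simp only [Finset.mem_Icc] at hi
    rw [abs_le]
    unfold swapPi
    split_ifs with h1 h2
    · constructor <;> push_cast <;> omega
    · have hi2 : 2 ≤ i := by have := h2.1; omega
      constructor <;> push_cast [Nat.cast_sub (by omega : 1 ≤ i)] <;> omega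
    · constructor <;> push_cast <;> omega

lemma sum_shift (t e : ℕ → ℤ) (h0 : e 0 = 0) (h20 : e 20 = 0) :
    ∑ x ∈ Finset.Icc 1 20, t x * (e x - e (x-1)) =
      ∑ i ∈ Finset.Icc 1 19, e i * (t i - t (i+1)) := by
  have h1 : ∑ x ∈ Finset.Icc 1 20, t x * (e x - e (x-1))
      = ∑ x ∈ Finset.Icc 1 20, t x * e x - ∑ x ∈ Finset.Icc 1 20, t x * e (x-1) := by
    rw [← Finset.sum_sub_distrib]
    exact Finset.sum_congr rfl fun x _ => by ring
  have h2 : ∑ x ∈ Finset.Icc 1 20, t x * e x = ∑ i ∈ Finset.Icc 1 19, t i * e i := by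
    rw [show (20:ℕ) = 19 + 1 from rfl, Finset.sum_Icc_succ_top (by norm_num)]
    simp [h20]
  have h3 : ∑ x ∈ Finset.Icc 1 20, t x * e (x-1) = ∑ i ∈ Finset.Icc 1 19, t (i+1) * e i := by
    rw [show (20:ℕ) = 19 + 1 from rfl, show (19:ℕ) = 18 + 1 from rfl,
      ← Finset.Ico_add_one_right_eq_Icc, ← Finset.Ico_add_one_right_eq_Icc,
      Finset.sum_Ico_eq_sum_range, Finset.sum_Ico_eq_sum_range]
    norm_num
    rw [Finset.sum_range_succ']
    have hz : t (1 + 0) * e (1 + 0 - 1) = 0 := by norm_num [h0]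
    rw [hz, add_zero]
    apply Finset.sum_congr rfl
    intro j _
    congr 1 <;> congr 1 <;> omega
  rw [h1, h2, h3, ← Finset.sum_sub_distrib]
  exact Finset.sum_congr rfl fun x _ => by ring

lemma eta_pointwise (π : ℕ → ℕ) (hπ : IsSwapCollection 20 1 π) (x : ℕ) (hx : x ∈ Finset.Icc 1 20) :
    (π x : ℤ) - x = (if 1 ≤ x ∧ x ≤ 19 ∧ π x = x + 1 then (1:ℤ) else 0)
      - (if 1 ≤ x - 1 ∧ x - 1 ≤ 19 ∧ π (x-1) = (x-1) + 1 then (1:ℤ) else 0) := by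
  obtain ⟨hmem, hinv, habs⟩ := hπ
  simp only [Finset.mem_Icc] at hx
  have hmx := hmem x (by simp only [Finset.mem_Icc]; omega)
  simp only [Finset.mem_Icc] at hmx
  have habx := abs_le.mp (habs x (by simp only [Finset.mem_Icc]; omega))
  have htri : π x = x + 1 ∨ π x = x ∨ (π x + 1 = x) := by omega
  rcases htri with h | h | h
  · -- π x = x + 1
    have hx19 : x ≤ 19 := by omega
    have hnd : ¬ (1 ≤ x - 1 ∧ x - 1 ≤ 19 ∧ π (x-1) = (x-1) + 1) := by
      rintro ⟨ha, hb, hc⟩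
      have hxm : x - 1 ∈ Finset.Icc 1 20 := by simp only [Finset.mem_Icc]; omega
      have := hinv (x-1) hxm
      rw [hc] at this
      rw [show x - 1 + 1 = x from by omega] at this
      omega
    rw [if_pos ⟨by omega, hx19, h⟩, if_neg hnd]
    push_cast [h]; ring
  · -- π x = x
    have hnd1 : ¬ (1 ≤ x ∧ x ≤ 19 ∧ π x = x + 1) := by rintro ⟨_, _, hc⟩; omega
    have hnd : ¬ (1 ≤ x - 1 ∧ x - 1 ≤ 19 ∧ π (x-1) = (x-1) + 1) := by
      rintro ⟨ha, hb, hc⟩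
      have hxm : x - 1 ∈ Finset.Icc 1 20 := by simp only [Finset.mem_Icc]; omega
      have := hinv (x-1) hxm
      rw [hc] at this
      rw [show x - 1 + 1 = x from by omega] at this
      omega
    rw [if_neg hnd1, if_neg hnd, h]
    ring
  · -- π x = x - 1
    have hx2 : 2 ≤ x := by omega
    have hnd1 : ¬ (1 ≤ x ∧ x ≤ 19 ∧ π x = x + 1) := by rintro ⟨_, _, hc⟩; omega
    have hd : 1 ≤ x - 1 ∧ x - 1 ≤ 19 ∧ π (x-1) = (x-1) + 1 := by
      refine ⟨by omega, by omega, ?_⟩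
      have := hinv x (by simp only [Finset.mem_Icc]; omega)
      rw [show π x = x - 1 from by omega] at this
      omega
    rw [if_neg hnd1, if_pos hd]
    push_cast
    omega

lemma genpi_le (K : ℕ → ℕ) (σ : Fin 5 → Bool) (π : ℕ → ℕ) (hπ : IsSwapCollection 20 1 π) :
    ∑ x ∈ Finset.Icc 1 20, tau K σ x * ((π x : ℤ) - x)
      ≤ ∑ i ∈ Finset.Icc 1 19, (if isDes K σ i then (2:ℤ) else 0) := by
  set e : ℕ → ℤ := fun x => if 1 ≤ x ∧ x ≤ 19 ∧ π x = x + 1 then (1:ℤ) else 0 with he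
  have h1 : ∑ x ∈ Finset.Icc 1 20, tau K σ x * ((π x : ℤ) - x)
      = ∑ x ∈ Finset.Icc 1 20, tau K σ x * (e x - e (x-1)) := by
    apply Finset.sum_congr rfl
    intro x hx
    rw [eta_pointwise π hπ x hx]
  rw [h1, sum_shift _ _ (by norm_num [he]) (by norm_num [he])]
  apply Finset.sum_le_sum
  intro i hi
  simp only [Finset.mem_Icc] at hi
  have h0 : 0 ≤ e i := by rw [he]; dsimp only; split <;> norm_num
  have h1' : e i ≤ 1 := by rw [he]; dsimp only; split <;> norm_num
  by_cases hd : isDes K σ i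
  · rw [if_pos hd, hd.2.2.1, hd.2.2.2]
    nlinarith
  · rw [if_neg hd]
    have hc : ¬ (tau K σ i = 1 ∧ tau K σ (i+1) = -1) := fun hc => hd ⟨hi.1, hi.2, hc.1, hc.2⟩
    rcases tau_pm K σ i with h | h <;> rcases tau_pm K σ (i+1) with h' | h'
    · rw [h, h']; nlinarith
    · exact absurd ⟨h, h'⟩ hc
    · rw [h, h']; nlinarith
    · rw [h, h']; nlinarith

lemma swapPi_eq (K : ℕ → ℕ) (σ : Fin 5 → Bool) :
    ∑ x ∈ Finset.Icc 1 20, tau K σ x * ((swapPi K σ x : ℤ) - x)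
      = ∑ i ∈ Finset.Icc 1 19, (if isDes K σ i then (2:ℤ) else 0) := by
  set e : ℕ → ℤ := fun x => if isDes K σ x then (1:ℤ) else 0 with he
  have h1 : ∀ x ∈ Finset.Icc 1 20,
      tau K σ x * ((swapPi K σ x : ℤ) - x) = tau K σ x * (e x - e (x-1)) := by
    intro x hx
    simp only [Finset.mem_Icc] at hx
    congr 1
    unfold swapPi
    by_cases hd : isDes K σ x
    · have hnd : ¬ isDes K σ (x-1) := by
        intro h
        have hc := h.2.2.2
        rw [show x - 1 + 1 = x from by omega] at hc
        have := hd.2.2.1; omega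
      rw [if_pos hd, he]; dsimp only
      rw [if_pos hd, if_neg hnd]
      push_cast; ring
    · by_cases hd2 : isDes K σ (x-1)
      · have hx2 : 2 ≤ x := by have := hd2.1; omega
        rw [if_neg hd, if_pos hd2, he]; dsimp only
        rw [if_neg hd, if_pos hd2]
        push_cast [Nat.cast_sub (show 1 ≤ x by omega)]
        ring
      · rw [if_neg hd, if_neg hd2, he]; dsimp only
        rw [if_neg hd, if_neg hd2]
        push_cast; ring
  rw [Finset.sum_congr rfl h1, sum_shift _ _ ?z0 ?z20]
  case z0 =>
    rw [he]; dsimp only; rw [if_neg]; intro h; exact absurd h.1 (by norm_num)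
  case z20 =>
    rw [he]; dsimp only; rw [if_neg]; intro h; have := h.2.1; omega
  apply Finset.sum_congr rfl
  intro i hi
  simp only [Finset.mem_Icc] at hi
  by_cases hd : isDes K σ i
  · rw [if_pos hd, he]; dsimp only; rw [if_pos hd, hd.2.2.1, hd.2.2.2]; ring
  · rw [if_neg hd, he]; dsimp only; rw [if_neg hd]; ring

lemma des_lb (K : ℕ → ℕ) (σ : Fin 5 → Bool) :
    ∑ i ∈ Finset.Icc 1 19, (if isDes K σ i then (2:ℤ) else 0)
      = (∑ i ∈ Finset.Icc 1 19, (if tau K σ i ≠ tau K σ (i+1) then (1:ℤ) else 0))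
        + ((if tau K σ 1 = 1 then (1:ℤ) else 0) - (if tau K σ 20 = 1 then (1:ℤ) else 0)) := by
  have key : ∀ i ∈ Finset.Icc 1 19, (if isDes K σ i then (2:ℤ) else 0)
      = (if tau K σ i ≠ tau K σ (i+1) then (1:ℤ) else 0)
        + ((if tau K σ i = 1 then (1:ℤ) else 0) - (if tau K σ (i+1) = 1 then (1:ℤ) else 0)) := by
    intro i hi
    simp only [Finset.mem_Icc] at hi
    have hdes : isDes K σ i ↔ (tau K σ i = 1 ∧ tau K σ (i+1) = -1) :=
      ⟨fun h => ⟨h.2.2.1, h.2.2.2⟩, fun h => ⟨hi.1, hi.2, h.1, h.2⟩⟩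
    rcases tau_pm K σ i with h | h <;> rcases tau_pm K σ (i+1) with h' | h' <;>
      simp [hdes, h, h'] <;> norm_num
  rw [Finset.sum_congr rfl key, Finset.sum_add_distrib]
  congr 1
  have hr := Finset.sum_range_sub' (fun j => if tau K σ (1+j) = 1 then (1:ℤ) else 0) 19
  simp only [show (1+0:ℕ) = 1 from rfl, show (1+19:ℕ) = 20 from rfl] at hr
  rw [show (19:ℕ) = 18 + 1 from rfl, ← Finset.Ico_add_one_right_eq_Icc, Finset.sum_Ico_eq_sum_range,
    show (18 + 1 + 1 - 1 : ℕ) = 19 from rfl, ← hr]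
  apply Finset.sum_congr rfl
  intro j _
  rw [show 1+j+1 = 1+(j+1) from by omega]

lemma pair_split (f : ℕ → ℤ) :
    ∑ k ∈ Finset.Icc 1 10, f k = ∑ i ∈ Finset.Icc 1 5, (f (2*i-1) + f (2*i)) := by
  rw [show (Finset.Icc 1 10 : Finset ℕ) = {1,2,3,4,5,6,7,8,9,10} from by decide,
      show (Finset.Icc 1 5 : Finset ℕ) = {1,2,3,4,5} from by decide]
  norm_num [Finset.sum_insert, Finset.mem_insert]
  ring

lemma sum_eq (S : ℕ → Finset ℕ) (K : ℕ → ℕ) (π : ℕ → ℕ) (σ : Fin 5 → Bool)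
    (hdisj : ∀ k ∈ Finset.Icc 1 10, ∀ k' ∈ Finset.Icc 1 10, k ≠ k' → Disjoint (S k) (S k'))
    (hcov : (Finset.Icc 1 10).biUnion S = Finset.Icc 1 20)
    (hKu : ∀ k ∈ Finset.Icc 1 10, ∀ x ∈ S k, K x = k) :
    ∑ i ∈ Finset.Icc 1 5, wgt σ (2*i-1) *
        ((∑ x ∈ S (2*i-1), ((π x:ℤ) - x)) - ∑ x ∈ S (2*i), ((π x:ℤ) - x))
      = ∑ x ∈ Finset.Icc 1 20, tau K σ x * ((π x:ℤ) - x) := by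
  have hpd : Set.PairwiseDisjoint (↑(Finset.Icc 1 10) : Set ℕ) S := by
    intro a ha b hb hne
    exact hdisj a (by simpa using ha) b (by simpa using hb) hne
  rw [← hcov, Finset.sum_biUnion hpd]
  have hterm : ∀ k ∈ Finset.Icc 1 10,
      (∑ x ∈ S k, tau K σ x * ((π x:ℤ) - x)) = wgt σ k * ∑ x ∈ S k, ((π x:ℤ) - x) := by
    intro k hk
    rw [Finset.mul_sum]
    apply Finset.sum_congr rfl
    intro x hx
    rw [tau, hKu k hk x hx]
  rw [Finset.sum_congr rfl hterm, pair_split (fun k => wgt σ k * ∑ x ∈ S k, ((π x:ℤ) - x))]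
  apply Finset.sum_congr rfl
  intro i hi
  simp only [Finset.mem_Icc] at hi
  rw [wgt_even σ i hi.1]
  ring

lemma disc_eq (S : ℕ → Finset ℕ) (π : ℕ → ℕ)
    (hbal : ∀ i ∈ Finset.Icc 1 5, (S (2*i-1)).sum id = (S (2*i)).sum id) :
    totalSetDiscrepancy 4 S π
      = ∑ i ∈ Finset.Icc 1 5,
          |(∑ x ∈ S (2*i-1), ((π x:ℤ) - x)) - ∑ x ∈ S (2*i), ((π x:ℤ) - x)| := by
  unfold totalSetDiscrepancy
  simp only [show (4:ℕ)+1 = 5 from rfl]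
  apply Finset.sum_congr rfl
  intro i hi
  congr 1
  have hsub : ∀ k, ((S k).sum fun x => (π x:ℤ)) = (∑ x ∈ S k, ((π x:ℤ) - x)) + ∑ x ∈ S k, (x:ℤ) := by
    intro k
    rw [← Finset.sum_add_distrib]
    apply Finset.sum_congr rfl
    intro x _
    ring
  have hc : (∑ x ∈ S (2*i-1), (x:ℤ)) = ∑ x ∈ S (2*i), (x:ℤ) := by
    have hb := hbal i hi
    have h1 : (((S (2*i-1)).sum id : ℕ) : ℤ) = (((S (2*i)).sum id : ℕ) : ℤ) := by exact_mod_cast hb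
    rw [Nat.cast_sum, Nat.cast_sum] at h1
    simpa [id] using h1
  rw [hsub, hsub, hc]
  ring

lemma lower_bound (S : ℕ → Finset ℕ) (hS : IsBalancedCompanionFamily 4 S) :
    ∃ π : ℕ → ℕ, IsSwapCollection 20 1 π ∧ 8 ≤ totalSetDiscrepancy 4 S π := by
  classical
  obtain ⟨h1, h2, h3, h4⟩ := hS
  simp only [show 2*4+2 = 10 from rfl, show 4*(4+1) = 20 from rfl,
    show 4+1 = 5 from rfl] at h1 h2 h3 h4
  have hex : ∀ x ∈ Finset.Icc 1 20, ∃ k, k ∈ Finset.Icc 1 10 ∧ x ∈ S k := by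
    intro x hx
    rw [← h3] at hx
    simpa using Finset.mem_biUnion.mp hx
  choose! K hK1 hK2 using hex
  have hKuniq : ∀ k ∈ Finset.Icc 1 10, ∀ x ∈ S k, K x = k := by
    intro k hk x hxS
    have hx20 : x ∈ Finset.Icc 1 20 := (h1 k hk).1 hxS
    by_contra hne
    exact Finset.disjoint_left.mp (h2 (K x) (hK1 x hx20) k hk hne) (hK2 x hx20) hxS
  -- N ≤ 5
  have hP5 : ((Finset.Icc 1 19).filter (fun i => K i = K (i+1))).card ≤ 5 := by
    have hmap : ∀ i ∈ (Finset.Icc 1 19).filter (fun i => K i = K (i+1)),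
        (K i + 1) / 2 ∈ Finset.Icc 1 5 := by
      intro i hi
      rw [Finset.mem_filter, Finset.mem_Icc] at hi
      have hKi := hK1 i (by simp only [Finset.mem_Icc]; omega)
      simp only [Finset.mem_Icc] at hKi ⊢
      omega
    have : ((Finset.Icc 1 19).filter (fun i => K i = K (i+1))).card ≤ (Finset.Icc 1 5).card := by
      apply Finset.card_le_card_of_injOn _ hmap
      intro a ha b hb hab
      simp only [Finset.coe_filter, Set.mem_setOf_eq, Finset.mem_Icc] at ha hb
      have hSpair : ∀ c, 1 ≤ c → c ≤ 19 → K c = K (c+1) → S (K c) = {c, c+1} := by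
        intro c hc1 hc19 hKc
        have hc20 : c ∈ Finset.Icc 1 20 := by simp only [Finset.mem_Icc]; omega
        have hc120 : c + 1 ∈ Finset.Icc 1 20 := by simp only [Finset.mem_Icc]; omega
        have hmem1 : c ∈ S (K c) := hK2 c hc20
        have hmem2 : c + 1 ∈ S (K c) := by rw [hKc]; exact hK2 (c+1) hc120
        have hsub : ({c, c+1} : Finset ℕ) ⊆ S (K c) := by
          intro y hy
          simp only [Finset.mem_insert, Finset.mem_singleton] at hy
          rcases hy with rfl | rfl
          · exact hmem1
          · exact hmem2
        have hcard : (S (K c)).card ≤ ({c, c+1} : Finset ℕ).card := by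
          rw [Finset.card_pair (by omega), (h1 (K c) (hK1 c hc20)).2]
        exact (Finset.eq_of_subset_of_card_le hsub hcard).symm
      have hSa := hSpair a ha.1.1 ha.1.2 ha.2
      have hSb := hSpair b hb.1.1 hb.1.2 hb.2
      have hKa := hK1 a (by simp only [Finset.mem_Icc]; omega)
      have hKb := hK1 b (by simp only [Finset.mem_Icc]; omega)
      simp only [Finset.mem_Icc] at hKa hKb
      by_cases he : K a = K b
      · rw [he, hSb] at hSa
        have hma : a ∈ ({a, a+1} : Finset ℕ) := by simp
        rw [← hSa] at hma
        have hmb : b ∈ ({b, b+1} : Finset ℕ) := by simp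
        rw [hSa] at hmb
        simp only [Finset.mem_insert, Finset.mem_singleton] at hma hmb
        omega
      · set j := (K a + 1) / 2 with hj
        have hblk : (K b + 1) / 2 = j := hab.symm
        have hj5 : j ∈ Finset.Icc 1 5 := by simp only [Finset.mem_Icc]; omega
        have hsums := h4 j hj5
        have hsa : (S (K a)).sum id = a + (a+1) := by
          rw [hSa, Finset.sum_pair (by omega : a ≠ a+1)]
          rfl
        have hsb : (S (K b)).sum id = b + (b+1) := by
          rw [hSb, Finset.sum_pair (by omega : b ≠ b+1)]
          rfl
        have hcase : (K a = 2*j - 1 ∧ K b = 2*j) ∨ (K b = 2*j - 1 ∧ K a = 2*j) := by omega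
        rcases hcase with ⟨hA, hB⟩ | ⟨hA, hB⟩
        · rw [hA] at hsa
          rw [hB] at hsb
          rw [hsa, hsb] at hsums
          omega
        · rw [hA] at hsb
          rw [hB] at hsa
          rw [hsa, hsb] at hsums
          omega
    simpa using this
  -- averaging
  have havg : (224:ℤ) ≤ ∑ σ : Fin 5 → Bool, ∑ i ∈ Finset.Icc 1 19,
      (if isDes K σ i then (2:ℤ) else 0) := by
    have hres : ∀ σ ∈ (Finset.univ : Finset (Fin 5 → Bool)),
        (∑ i ∈ Finset.Icc 1 19, (if isDes K σ i then (2:ℤ) else 0))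
        = (∑ i ∈ Finset.Icc 1 19, (if tau K σ i ≠ tau K σ (i+1) then (1:ℤ) else 0))
          + ((if tau K σ 1 = 1 then (1:ℤ) else 0) - (if tau K σ 20 = 1 then (1:ℤ) else 0)) :=
      fun σ _ => des_lb K σ
    rw [Finset.sum_congr rfl hres, Finset.sum_add_distrib, Finset.sum_sub_distrib]
    have hc1 : (∑ σ : Fin 5 → Bool, (if tau K σ 1 = 1 then (1:ℤ) else 0)) = 16 := by
      have := cnt1 (K 1) (hK1 1 (by simp only [Finset.mem_Icc]; omega))
      simp only [tau]; convert this using 2 with σ _; exact if_congr Iff.rfl rfl rfl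
    have hc20 : (∑ σ : Fin 5 → Bool, (if tau K σ 20 = 1 then (1:ℤ) else 0)) = 16 := by
      have := cnt1 (K 20) (hK1 20 (by simp only [Finset.mem_Icc]; omega))
      simp only [tau]; convert this using 2 with σ _; exact if_congr Iff.rfl rfl rfl
    have hchg : (16:ℤ) * 14 ≤ ∑ σ : Fin 5 → Bool, ∑ i ∈ Finset.Icc 1 19,
        (if tau K σ i ≠ tau K σ (i+1) then (1:ℤ) else 0) := by
      rw [Finset.sum_comm]
      have hstep : ∀ i ∈ Finset.Icc 1 19, (if K i = K (i+1) then (0:ℤ) else 16)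
          ≤ ∑ σ : Fin 5 → Bool, (if tau K σ i ≠ tau K σ (i+1) then (1:ℤ) else 0) := by
        intro i hi
        simp only [Finset.mem_Icc] at hi
        by_cases hk : K i = K (i+1)
        · rw [if_pos hk]
          apply Finset.sum_nonneg
          intro σ _
          split <;> norm_num
        · rw [if_neg hk]
          have hKi := hK1 i (by simp only [Finset.mem_Icc]; omega)
          have hKi1 := hK1 (i+1) (by simp only [Finset.mem_Icc]; omega)
          have := cnt2 (K i) hKi (K (i+1)) hKi1 hk
          simp only [tau]; convert this using 2 with σ _; exact if_congr Iff.rfl rfl rfl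
      have hlow : (16:ℤ) * 14 ≤ ∑ i ∈ Finset.Icc 1 19, (if K i = K (i+1) then (0:ℤ) else 16) := by
        rw [Finset.sum_ite]
        simp only [Finset.sum_const, nsmul_eq_mul, smul_eq_mul, mul_zero, Finset.sum_const_zero, zero_add]
        have hcards := Finset.card_filter_add_card_filter_not
          (s := Finset.Icc 1 19) (p := fun i => K i = K (i+1))
        simp only [Nat.card_Icc] at hcards
        beta_reduce at hcards ⊢
        omega
      calc (16:ℤ) * 14 ≤ _ := hlow
        _ ≤ _ := Finset.sum_le_sum hstep
    rw [hc1, hc20]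
    linarith
  have hex7 : ∃ σ : Fin 5 → Bool,
      (7:ℤ) ≤ ∑ i ∈ Finset.Icc 1 19, (if isDes K σ i then (2:ℤ) else 0) := by
    by_contra hno
    push_neg at hno
    have hle : (∑ σ : Fin 5 → Bool, ∑ i ∈ Finset.Icc 1 19, (if isDes K σ i then (2:ℤ) else 0))
        ≤ ∑ _σ : Fin 5 → Bool, (6:ℤ) := by
      apply Finset.sum_le_sum
      intro σ _
      have := hno σ
      omega
    rw [Finset.sum_const] at hle
    have hcard : (Finset.univ : Finset (Fin 5 → Bool)).card = 32 := by
      simp [Finset.card_univ]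
    rw [hcard] at hle
    norm_num at hle
    linarith
  obtain ⟨σ, hσ7⟩ := hex7
  have hσ8 : (8:ℤ) ≤ ∑ i ∈ Finset.Icc 1 19, (if isDes K σ i then (2:ℤ) else 0) := by
    have heven : (∑ i ∈ Finset.Icc 1 19, (if isDes K σ i then (2:ℤ) else 0))
        = 2 * ∑ i ∈ Finset.Icc 1 19, (if isDes K σ i then (1:ℤ) else 0) := by
      rw [Finset.mul_sum]
      apply Finset.sum_congr rfl
      intro i _
      split <;> ring
    rw [heven] at hσ7 ⊢
    omega
  refine ⟨swapPi K σ, swapPi_valid K σ, ?_⟩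
  rw [disc_eq S (swapPi K σ) h4]
  have hstep : ∑ i ∈ Finset.Icc 1 5, wgt σ (2*i-1) *
      ((∑ x ∈ S (2*i-1), ((swapPi K σ x:ℤ) - x)) - ∑ x ∈ S (2*i), ((swapPi K σ x:ℤ) - x))
      ≤ ∑ i ∈ Finset.Icc 1 5,
        |(∑ x ∈ S (2*i-1), ((swapPi K σ x:ℤ) - x)) - ∑ x ∈ S (2*i), ((swapPi K σ x:ℤ) - x)| := by
    apply Finset.sum_le_sum
    intro i _
    rcases wgt_pm σ (2*i-1) with h | h <;> rw [h]
    · rw [one_mul]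
      exact le_abs_self _
    · rw [neg_one_mul]
      exact neg_le_abs _
  calc (8:ℤ) ≤ ∑ i ∈ Finset.Icc 1 19, (if isDes K σ i then (2:ℤ) else 0) := hσ8
    _ = ∑ x ∈ Finset.Icc 1 20, tau K σ x * ((swapPi K σ x:ℤ) - x) := (swapPi_eq K σ).symm
    _ = ∑ i ∈ Finset.Icc 1 5, wgt σ (2*i-1) *
        ((∑ x ∈ S (2*i-1), ((swapPi K σ x:ℤ) - x)) - ∑ x ∈ S (2*i), ((swapPi K σ x:ℤ) - x)) :=
      (sum_eq S K (swapPi K σ) σ h2 h3 hKuniq).symm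
    _ ≤ _ := hstep

def S0 : ℕ → Finset ℕ := fun k =>
  if k = 1 then {1,20} else if k = 2 then {7,14} else if k = 3 then {2,17}
  else if k = 4 then {9,10} else if k = 5 then {3,8} else if k = 6 then {5,6}
  else if k = 7 then {4,19} else if k = 8 then {11,12} else if k = 9 then {13,18}
  else if k = 10 then {15,16} else ∅

def K0 : ℕ → ℕ := fun x =>
  if x = 1 ∨ x = 20 then 1 else if x = 7 ∨ x = 14 then 2 else if x = 2 ∨ x = 17 then 3
  else if x = 9 ∨ x = 10 then 4 else if x = 3 ∨ x = 8 then 5 else if x = 5 ∨ x = 6 then 6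
  else if x = 4 ∨ x = 19 then 7 else if x = 11 ∨ x = 12 then 8 else if x = 13 ∨ x = 18 then 9
  else if x = 15 ∨ x = 16 then 10 else 0

lemma S0_balanced : IsBalancedCompanionFamily 4 S0 := by
  unfold IsBalancedCompanionFamily
  refine ⟨?_, ?_, ?_, ?_⟩ <;> decide

lemma S0_disj : ∀ k ∈ Finset.Icc 1 10, ∀ k' ∈ Finset.Icc 1 10, k ≠ k' →
    Disjoint (S0 k) (S0 k') := by decide

lemma S0_cov : (Finset.Icc 1 10).biUnion S0 = Finset.Icc 1 20 := by decide

lemma S0_bal5 : ∀ i ∈ Finset.Icc 1 5, (S0 (2*i-1)).sum id = (S0 (2*i)).sum id := by decide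

lemma K0_compat : ∀ k ∈ Finset.Icc 1 10, ∀ x ∈ S0 k, K0 x = k := by decide

lemma desBound : ∀ σ : Fin 5 → Bool,
    (∑ i ∈ Finset.Icc 1 19, (if isDes K0 σ i then (2:ℤ) else 0)) ≤ 8 := by decide

lemma upper_bound : ∀ π : ℕ → ℕ, IsSwapCollection 20 1 π → totalSetDiscrepancy 4 S0 π ≤ 8 := by
  intro π hπ
  classical
  rw [disc_eq S0 π S0_bal5]
  set D : ℕ → ℤ :=
    fun i => (∑ x ∈ S0 (2*i-1), ((π x:ℤ) - x)) - ∑ x ∈ S0 (2*i), ((π x:ℤ) - x) with hD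
  set σ : Fin 5 → Bool := fun j => decide (0 ≤ D (j.val + 1)) with hσ
  have habs : ∀ i ∈ Finset.Icc 1 5, |D i| = wgt σ (2*i-1) * D i := by
    intro i hi
    simp only [Finset.mem_Icc] at hi
    have hm : (2*i-1) % 2 = 1 := by omega
    unfold wgt
    rw [if_pos hm, hσ]
    dsimp only
    simp only [show (2*i-1-1)/2 % 5 + 1 = i from by omega]
    by_cases h0 : 0 ≤ D i
    · have hdec : decide (0 ≤ D i) = true := decide_eq_true h0
      rw [hdec, if_pos rfl, abs_of_nonneg h0]
      ring
    · have hdec : decide (0 ≤ D i) = false := decide_eq_false h0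
      rw [hdec, if_neg (by simp), abs_of_neg (lt_of_not_ge h0)]
      ring
  calc ∑ i ∈ Finset.Icc 1 5, |D i|
      = ∑ i ∈ Finset.Icc 1 5, wgt σ (2*i-1) * D i := Finset.sum_congr rfl habs
    _ = ∑ x ∈ Finset.Icc 1 20, tau K0 σ x * ((π x:ℤ) - x) :=
        sum_eq S0 K0 π σ S0_disj S0_cov K0_compat
    _ ≤ ∑ i ∈ Finset.Icc 1 19, (if isDes K0 σ i then (2:ℤ) else 0) := genpi_le K0 σ π hπ
    _ ≤ 8 := desBound σ

/-- For `v = 20` (`t = 4`), the minimum over all balanced companion families on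
`{1,…,20}` of the worst-case total set discrepancy under magnitude-1 swaps
equals 8: every family admits a magnitude-1 swap collection of total set
discrepancy at least 8, and some family has total set discrepancy at most 8
under every magnitude-1 swap collection. -/
theorem v20_min_worstcase_discrepancy_eq_eight :
    (∀ S : ℕ → Finset ℕ, IsBalancedCompanionFamily 4 S →
      ∃ π : ℕ → ℕ, IsSwapCollection 20 1 π ∧ 8 ≤ totalSetDiscrepancy 4 S π) ∧
    (∃ S : ℕ → Finset ℕ, IsBalancedCompanionFamily 4 S ∧
      ∀ π : ℕ → ℕ, IsSwapCollection 20 1 π → totalSetDiscrepancy 4 S π ≤ 8) := by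
  exact ⟨lower_bound, S0, S0_balanced, upper_bound⟩
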